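/- The set A₀ coincides with the set of probability measures on Ω̄ of the form ν(dx) δ_{τ(x)}(dθ) with τ ∈ 𝒯; that is, A₀ = { ν(dx) δ_{τ(x)}(dθ) : τ ∈ 𝒯 }. -/

import Mathlib

open MeasureTheory ProbabilityTheory
open scoped NNReal ENNReal Topology
open scoped Fin.NatCast

namespace LPOS

variable (T : ℕ) (E : Type*) [MeasurableSpace E]

/-- canonical path space E^I, I = {0,…,T} -/
abbrev Path := Fin (T + 1) → E

/-- canonical space Ω̄ = E^I × I -/
abbrev OmegaBar := Path T E × Fin (T + 1)

/-- the filtration F^X_t = σ(X_s : s ≤ t) on the path space -/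
def FX (t : ℕ) : MeasurableSpace (Path T E) :=
  ⨆ s : Fin (T + 1), ⨆ _ : (s : ℕ) ≤ t, MeasurableSpace.comap (fun x => x s) inferInstance

/-- the filtration F^X̄_t = σ(X̄_s : s ≤ t) on Ω̄ -/
def FXbar (t : ℕ) : MeasurableSpace (OmegaBar T E) :=
  ⨆ s : Fin (T + 1), ⨆ _ : (s : ℕ) ≤ t, MeasurableSpace.comap (fun ω => ω.1 s) inferInstance

/-- the filtration F^τ̄_t = σ({τ̄ = 0},…,{τ̄ = t}) on Ω̄ -/
def Ftau (t : ℕ) : MeasurableSpace (OmegaBar T E) :=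
  MeasurableSpace.generateFrom {A | ∃ s : Fin (T + 1), (s : ℕ) ≤ t ∧ A = {ω | ω.2 = s}}

/-- F̄_t = F^X̄_t ∨ F^τ̄_t -/
def Fbar (t : ℕ) : MeasurableSpace (OmegaBar T E) := FXbar T E t ⊔ Ftau T E t

/-- F^{X̄,P̄}_t = F^X̄_t ∨ N_{P̄}(F̄_T) -/
def FXbarP (P : Measure (OmegaBar T E)) (t : ℕ) : MeasurableSpace (OmegaBar T E) :=
  FXbar T E t ⊔ MeasurableSpace.generateFrom
    {A | ∃ C, MeasurableSet[Fbar T E T] C ∧ P C = 0 ∧ A ⊆ C}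

/-- F^{X,ν}_t = F^X_t ∨ N_ν(F^X_T) on the path space -/
def FXnu (ν : Measure (Path T E)) (t : ℕ) : MeasurableSpace (Path T E) :=
  FX T E t ⊔ MeasurableSpace.generateFrom
    {A | ∃ C, MeasurableSet[FX T E T] C ∧ ν C = 0 ∧ A ⊆ C}

/-- "under P, X̄ is a G-Markov chain with transition kernels (π_t)" -/
def IsMarkovWith (P : Measure (OmegaBar T E)) (G : ℕ → MeasurableSpace (OmegaBar T E))
    (π : ℕ → Kernel E E) : Prop :=
  ∀ t : ℕ, 1 ≤ t → t ≤ T → ∀ B : Set E, MeasurableSet B →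
    (P[Set.indicator {ω | ω.1 (t : Fin (T + 1)) ∈ B} (fun _ => (1 : ℝ)) | G (t - 1)]
      =ᵐ[P] fun ω => (π t (ω.1 ((t - 1 : ℕ) : Fin (T + 1))) B).toReal)

/-- ν is the law of the Markov chain with kernels (π_t) and initial law m₀* -/
def IsMarkovLaw (ν : Measure (Path T E)) (π : ℕ → Kernel E E) (m0 : Measure E) : Prop :=
  ν.map (fun x => x 0) = m0 ∧
  ∀ t : ℕ, 1 ≤ t → t ≤ T → ∀ B : Set E, MeasurableSet B →
    (ν[Set.indicator {x | x (t : Fin (T + 1)) ∈ B} (fun _ => (1 : ℝ)) | FX T E (t - 1)]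
      =ᵐ[ν] fun x => (π t (x ((t - 1 : ℕ) : Fin (T + 1))) B).toReal)

/-- A₀ : under P, X̄ is a (plain) Markov chain with initial law m₀* and kernels (π_t),
and τ̄ is an F^{X̄,P̄}-stopping time -/
def A0 (π : ℕ → Kernel E E) (m0 : Measure E) : Set (Measure (OmegaBar T E)) :=
  {P | IsProbabilityMeasure P ∧ P.map (fun ω => ω.1 0) = m0 ∧
    IsMarkovWith T E P (FXbar T E) π ∧
    ∀ t : ℕ, t ≤ T → MeasurableSet[FXbarP T E P t] {ω | (ω.2 : ℕ) ≤ t}}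

/-- A₁ : under P, X̄ is an F̄-Markov chain with initial law m₀* and kernels (π_t) -/
def A1 (π : ℕ → Kernel E E) (m0 : Measure E) : Set (Measure (OmegaBar T E)) :=
  {P | IsProbabilityMeasure P ∧ P.map (fun ω => ω.1 0) = m0 ∧
    IsMarkovWith T E P (Fbar T E) π}

/-- occupation measure μ^P̄_t(B) = P̄(X̄_t ∈ B, τ̄ = t) -/
noncomputable def occMu (P : Measure (OmegaBar T E)) (t : Fin (T + 1)) : Measure E :=
  (P.restrict {ω | ω.2 = t}).map (fun ω => ω.1 t)

/-- occupation measure m^P̄_t(B) = P̄(X̄_t ∈ B, t < τ̄), t ∈ I∖{T} -/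
noncomputable def occM (P : Measure (OmegaBar T E)) (t : Fin T) : Measure E :=
  (P.restrict {ω | (t : ℕ) < (ω.2 : ℕ)}).map (fun ω => ω.1 t.castSucc)

/-- the pair of families of occupation measures induced by a probability measure on Ω̄ -/
instance occMu_finite (P : Measure (OmegaBar T E)) [IsFiniteMeasure P] (t : Fin (T + 1)) :
    IsFiniteMeasure (occMu T E P t) := by
  unfold occMu; infer_instance

instance occM_finite (P : Measure (OmegaBar T E)) [IsFiniteMeasure P] (t : Fin T) :
    IsFiniteMeasure (occM T E P t) := by
  unfold occM; infer_instance

/-- the pair of families of occupation measures induced by a probability measure on Ω̄ -/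
noncomputable def occ (P : ProbabilityMeasure (OmegaBar T E)) :
    (Fin (T + 1) → FiniteMeasure E) × (Fin T → FiniteMeasure E) :=
  (fun t => ⟨occMu T E (P : Measure (OmegaBar T E)) t, inferInstance⟩,
   fun t => ⟨occM T E (P : Measure (OmegaBar T E)) t, inferInstance⟩)

/-- the linear-programming constraint set R -/
def Rset [TopologicalSpace E] (π : ℕ → Kernel E E) (m0 : Measure E) :
    Set ((Fin (T + 1) → FiniteMeasure E) × (Fin T → FiniteMeasure E)) :=
  {q | (∀ t, q.1 t Set.univ ≤ 1) ∧ (∀ t, q.2 t Set.univ ≤ 1) ∧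
    ∀ φ : ℕ → E → ℝ, (∀ t, Continuous (φ t)) →
      ∑ t : Fin (T + 1), ∫ x, φ t x ∂(q.1 t : Measure E)
        = (∫ x, φ 0 x ∂m0) +
          ∑ t : Fin T, ∫ x, ((∫ y, φ ((t : ℕ) + 1) y ∂(π ((t : ℕ) + 1) x)) - φ t x)
            ∂(q.2 t : Measure E)}

noncomputable def Mphi (π : ℕ → Kernel E E) (φ : ℕ → E → ℝ) (t : ℕ)
    (ω : OmegaBar T E) : ℝ :=
  φ t (ω.1 (t : Fin (T + 1))) -
    ∑ s ∈ Finset.range t,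
      ((∫ y, φ (s + 1) y ∂(π (s + 1) (ω.1 (s : Fin (T + 1))))) - φ s (ω.1 (s : Fin (T + 1))))

def sigmaTimes (t : ℕ) : MeasurableSpace (Fin (T + 1)) :=
  MeasurableSpace.generateFrom {S | ∃ s : Fin (T + 1), (s : ℕ) ≤ t ∧ S = {s}}

section Thms

variable [MetricSpace E] [CompactSpace E] [Nonempty E] [BorelSpace E]
    [SecondCountableTopology E]

set_option linter.unusedSectionVars false

section Lemmas
variable {T E}

lemma FX_le (t : ℕ) : FX T E t ≤ (inferInstance : MeasurableSpace (Path T E)) := by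
  refine iSup_le fun s => iSup_le fun _ => ?_
  exact (measurable_pi_apply s).comap_le

lemma FX_mono {s t : ℕ} (h : s ≤ t) : FX T E s ≤ FX T E t := by
  refine iSup_le fun u => iSup_le fun hu => ?_
  exact le_iSup_of_le u (le_iSup_of_le (hu.trans h) le_rfl)

lemma measurable_eval_FX {t : ℕ} (s : Fin (T + 1)) (hs : (s : ℕ) ≤ t) :
    Measurable[FX T E t] (fun x : Path T E => x s) :=
  Measurable.of_comap_le (le_iSup_of_le s (le_iSup_of_le hs le_rfl))

lemma FX_top : FX T E T = (inferInstance : MeasurableSpace (Path T E)) := by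
  refine le_antisymm (FX_le T) ?_
  show MeasurableSpace.pi ≤ _
  refine iSup_le fun s => ?_
  exact le_iSup_of_le s (le_iSup_of_le (Nat.lt_succ_iff.mp s.isLt) le_rfl)

lemma FXbar_eq_comap (t : ℕ) :
    FXbar T E t = (FX T E t).comap Prod.fst := by
  rw [FX, FXbar, MeasurableSpace.comap_iSup]
  refine iSup_congr fun s => ?_
  rw [MeasurableSpace.comap_iSup]
  refine iSup_congr fun _ => ?_
  rw [MeasurableSpace.comap_comp]
  rfl

lemma FXbar_le (t : ℕ) : FXbar T E t ≤ (inferInstance : MeasurableSpace (OmegaBar T E)) := by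
  rw [FXbar_eq_comap]
  exact (MeasurableSpace.comap_mono (FX_le t)).trans measurable_fst.comap_le

end Lemmas
section Lemmas2
variable {T E}

lemma FX_zero : FX T E 0 = MeasurableSpace.comap (fun x : Path T E => x 0) inferInstance := by
  refine le_antisymm (iSup_le fun s => iSup_le fun hs => ?_)
    (le_iSup_of_le 0 (le_iSup_of_le (by simp) le_rfl))
  have : s = 0 := Fin.ext (by simpa using Nat.le_zero.mp hs)
  subst this; exact le_rfl

lemma FX_succ {t : ℕ} (ht : t + 1 ≤ T) :
    FX T E (t + 1) = FX T E t ⊔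
      MeasurableSpace.comap (fun x : Path T E => x (Nat.cast (t + 1) : Fin (T + 1))) inferInstance := by
  have hv : (Nat.cast (t + 1) : Fin (T + 1)).val = t + 1 :=
    Fin.val_cast_of_lt (Nat.lt_succ_of_le ht)
  refine le_antisymm (iSup_le fun s => iSup_le fun hs => ?_) ?_
  · rcases Nat.lt_succ_iff_lt_or_eq.mp (Nat.lt_succ_of_le hs) with h | h
    · exact le_sup_of_le_left (le_iSup_of_le s (le_iSup_of_le (Nat.lt_succ_iff.mp h) le_rfl))
    · have : s = (Nat.cast (t + 1) : Fin (T + 1)) := Fin.ext (by rw [hv]; exact h)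
      subst this; exact le_sup_of_le_right le_rfl
  · refine sup_le (FX_mono (Nat.le_succ t)) ?_
    exact le_iSup_of_le _ (le_iSup_of_le (by rw [hv]) le_rfl)

end Lemmas2
section CondexpTransfer

open MeasurableSpace in
lemma condexp_comap_fst {α β : Type*} {m : MeasurableSpace α} [mα : MeasurableSpace α]
    [mβ : MeasurableSpace β] (hm : m ≤ mα) (P : Measure (α × β)) [IsFiniteMeasure P]
    {f : α → ℝ} (hfm : StronglyMeasurable f) (hfi : Integrable f (P.map Prod.fst)) :
    P[(fun ω : α × β => f ω.1) | m.comap Prod.fst]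
      =ᵐ[P] fun ω : α × β => (condExp m (P.map Prod.fst) f) ω.1 := by
  set Q := P.map Prod.fst with hQdef
  haveI : IsFiniteMeasure Q :=
    ⟨by rw [hQdef, Measure.map_apply measurable_fst MeasurableSet.univ]
        exact measure_lt_top P _⟩
  have hcle : m.comap (Prod.fst : α × β → α) ≤ @Prod.instMeasurableSpace α β mα mβ :=
    (MeasurableSpace.comap_mono hm).trans measurable_fst.comap_le
  have hfstm : Measurable[m.comap Prod.fst, m] (Prod.fst : α × β → α) :=
    Measurable.of_comap_le le_rfl
  have hcesm : AEStronglyMeasurable (Q[f|m]) Q :=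
    (stronglyMeasurable_condExp.mono hm).aestronglyMeasurable
  have hfP : Integrable (fun ω : α × β => f ω.1) P := by
    have := (integrable_map_measure hfm.aestronglyMeasurable measurable_fst.aemeasurable).mp hfi
    exact this
  refine (ae_eq_condExp_of_forall_setIntegral_eq hcle hfP ?_ ?_ ?_).symm
  · intro s _ _
    have : Integrable (fun ω : α × β => (Q[f|m]) ω.1) P := by
      have := (integrable_map_measure hcesm measurable_fst.aemeasurable).mp integrable_condExp
      exact this
    exact this.integrableOn
  · rintro s hs -
    obtain ⟨A, hA, rfl⟩ := measurableSet_comap.mp hs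
    have hAamb : MeasurableSet A := hm A hA
    have h1 : ∫ x in Prod.fst ⁻¹' A, (Q[f|m]) x.1 ∂P = ∫ y in A, (Q[f|m]) y ∂Q := by
      rw [hQdef, setIntegral_map hAamb hcesm measurable_fst.aemeasurable]
    have h2 : ∫ x in Prod.fst ⁻¹' A, f x.1 ∂P = ∫ y in A, f y ∂Q := by
      rw [hQdef, setIntegral_map hAamb hfm.aestronglyMeasurable measurable_fst.aemeasurable]
    rw [h1, h2, setIntegral_condExp hm hfi hA]
  · exact StronglyMeasurable.aestronglyMeasurable
      (stronglyMeasurable_condExp.comp_measurable hfstm)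

end CondexpTransfer
section Unique
variable {T E}

lemma eq_on_FX_integral {Q ν : Measure (Path T E)} {t : ℕ}
    (h : ∀ A, MeasurableSet[FX T E t] A → Q A = ν A) {f : Path T E → ℝ}
    (hf : StronglyMeasurable[FX T E t] f) {A : Set (Path T E)}
    (hA : MeasurableSet[FX T E t] A) :
    ∫ x in A, f x ∂Q = ∫ x in A, f x ∂ν := by
  have htrim : Q.trim (FX_le t) = ν.trim (FX_le t) := by
    refine @Measure.ext _ (FX T E t) _ _ fun s hs => ?_
    rw [trim_measurableSet_eq _ hs, trim_measurableSet_eq _ hs, h s hs]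
  calc ∫ x in A, f x ∂Q = ∫ x, f x ∂((Q.restrict A).trim (FX_le t)) := integral_trim _ hf
    _ = ∫ x, f x ∂((Q.trim (FX_le t)).restrict A) := by rw [restrict_trim _ _ hA]
    _ = ∫ x, f x ∂((ν.trim (FX_le t)).restrict A) := by rw [htrim]
    _ = ∫ x in A, f x ∂ν := by
        rw [restrict_trim _ _ hA]; exact (integral_trim _ hf).symm

lemma markov_step_measure {π : ℕ → Kernel E E} (Q : Measure (Path T E))
    [IsProbabilityMeasure Q] {t : ℕ} {B' : Set E} (hB : MeasurableSet B')
    (hQ : (Q[Set.indicator {x : Path T E | x (Nat.cast (t + 1) : Fin (T + 1)) ∈ B'}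
          (fun _ => (1 : ℝ)) | FX T E t] =ᵐ[Q]
        fun x => (π (t + 1) (x ((t : ℕ) : Fin (T + 1))) B').toReal))
    {A : Set (Path T E)} (hA : MeasurableSet[FX T E t] A) :
    (Q (A ∩ (fun x : Path T E => x (Nat.cast (t + 1) : Fin (T + 1))) ⁻¹' B')).toReal
      = ∫ x in A, (π (t + 1) (x ((t : ℕ) : Fin (T + 1))) B').toReal ∂Q := by
  set s : Set (Path T E) := {x | x (Nat.cast (t + 1) : Fin (T + 1)) ∈ B'} with hsdef
  have hsm : MeasurableSet s := measurable_pi_apply _ hB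
  have hind : Integrable (s.indicator fun _ => (1 : ℝ)) Q :=
    (integrable_const (1 : ℝ)).indicator hsm
  have h1 : ∫ x in A, s.indicator (fun _ => (1 : ℝ)) x ∂Q
      = (Q (A ∩ s)).toReal := by
    rw [setIntegral_indicator hsm]
    simp [Measure.restrict_apply]
    rfl
  have h2 : ∫ x in A, s.indicator (fun _ => (1 : ℝ)) x ∂Q
      = ∫ x in A, (Q[s.indicator (fun _ => (1 : ℝ)) | FX T E t]) x ∂Q :=
    (setIntegral_condExp (FX_le t) hind hA).symm
  have h3 : ∫ x in A, (Q[s.indicator (fun _ => (1 : ℝ)) | FX T E t]) x ∂Q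
      = ∫ x in A, (π (t + 1) (x ((t : ℕ) : Fin (T + 1))) B').toReal ∂Q :=
    integral_congr_ae (ae_restrict_of_ae hQ)
  have : A ∩ (fun x : Path T E => x (Nat.cast (t + 1) : Fin (T + 1))) ⁻¹' B' = A ∩ s := rfl
  rw [this, ← h1, h2, h3]

lemma measurable_pikernel_FX {π : ℕ → Kernel E E} {t : ℕ} {B' : Set E}
    (hB : MeasurableSet B') :
    Measurable[FX T E t]
      (fun x : Path T E => (π (t + 1) (x ((t : ℕ) : Fin (T + 1))) B').toReal) := by
  have h1 : Measurable[FX T E t] (fun x : Path T E => x ((t : ℕ) : Fin (T + 1))) :=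
    measurable_eval_FX _ (by
      rw [Fin.val_natCast]
      exact Nat.mod_le t (T + 1))
  exact (ENNReal.measurable_toReal.comp ((π (t + 1)).measurable_coe hB)).comp h1

lemma markovLaw_unique {π : ℕ → Kernel E E} {m0 : Measure E}
    (Q ν : Measure (Path T E)) [IsProbabilityMeasure Q] [IsProbabilityMeasure ν]
    (hQ : IsMarkovLaw T E Q π m0) (hν : IsMarkovLaw T E ν π m0) : Q = ν := by
  have key : ∀ t, t ≤ T → ∀ A, MeasurableSet[FX T E t] A → Q A = ν A := by
    intro t
    induction t with
    | zero =>
      intro _ A hA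
      rw [FX_zero] at hA
      obtain ⟨B, hB, rfl⟩ := MeasurableSpace.measurableSet_comap.mp hA
      have e1 : Q ((fun x : Path T E => x 0) ⁻¹' B) = m0 B := by
        rw [← hQ.1, Measure.map_apply (measurable_pi_apply 0) hB]
      have e2 : ν ((fun x : Path T E => x 0) ⁻¹' B) = m0 B := by
        rw [← hν.1, Measure.map_apply (measurable_pi_apply 0) hB]
      rw [e1, e2]
    | succ t ih =>
      intro ht1 A hA
      have ihh := ih (Nat.le_of_succ_le ht1)
      set c : Fin (T + 1) := (Nat.cast (t + 1) : Fin (T + 1)) with hc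
      set C : Set (Set (Path T E)) :=
        {S | ∃ A' B', MeasurableSet[FX T E t] A' ∧ MeasurableSet B' ∧
          S = A' ∩ (fun x : Path T E => x c) ⁻¹' B'} with hCdef
      have hgen : FX T E (t + 1) = MeasurableSpace.generateFrom C := by
        rw [FX_succ ht1]
        refine le_antisymm (sup_le ?_ ?_) (MeasurableSpace.generateFrom_le ?_)
        · intro S hS
          exact MeasurableSpace.measurableSet_generateFrom
            ⟨S, Set.univ, hS, MeasurableSet.univ, by simp⟩
        · intro S hS
          obtain ⟨B, hB, rfl⟩ := MeasurableSpace.measurableSet_comap.mp hS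
          exact MeasurableSpace.measurableSet_generateFrom
            ⟨Set.univ, B, MeasurableSet.univ, hB, by rw [Set.univ_inter, hc]⟩
        · rintro S ⟨A', B', hA', hB', rfl⟩
          exact MeasurableSet.inter (le_sup_left (α := MeasurableSpace (Path T E)) _ hA')
            (le_sup_right (α := MeasurableSpace (Path T E)) _ ⟨B', hB', rfl⟩)
      have hCpi : IsPiSystem C := by
        rintro S1 ⟨A1, B1, hA1, hB1, rfl⟩ S2 ⟨A2, B2, hA2, hB2, rfl⟩ -
        refine ⟨A1 ∩ A2, B1 ∩ B2, hA1.inter hA2, hB1.inter hB2, ?_⟩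
        ext x
        simp only [Set.mem_inter_iff, Set.mem_preimage]
        tauto
      have hagree : ∀ S ∈ C, Q S = ν S := by
        rintro S ⟨A', B', hA', hB', rfl⟩
        have hQ' := hQ.2 (t + 1) (Nat.le_add_left 1 t) ht1 B' hB'
        have hν' := hν.2 (t + 1) (Nat.le_add_left 1 t) ht1 B' hB'
        simp only [Nat.add_sub_cancel] at hQ' hν'
        have e1 := markov_step_measure Q hB' hQ' hA'
        have e2 := markov_step_measure ν hB' hν' hA'
        have e3 : ∫ x in A', (π (t + 1) (x ((t : ℕ) : Fin (T + 1))) B').toReal ∂Q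
            = ∫ x in A', (π (t + 1) (x ((t : ℕ) : Fin (T + 1))) B').toReal ∂ν :=
          eq_on_FX_integral ihh
            (Measurable.stronglyMeasurable (measurable_pikernel_FX hB')) hA'
        exact (ENNReal.toReal_eq_toReal_iff' (measure_ne_top Q _) (measure_ne_top ν _)).mp
          (by rw [e1, e3, ← e2])
      have htrim : Q.trim (FX_le (t + 1)) = ν.trim (FX_le (t + 1)) := by
        haveI h1 : @IsFiniteMeasure _ (FX T E (t + 1)) (Q.trim (FX_le (t + 1))) :=
          isFiniteMeasure_trim _
        haveI h2 : @IsFiniteMeasure _ (FX T E (t + 1)) (ν.trim (FX_le (t + 1))) :=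
          isFiniteMeasure_trim _
        refine MeasureTheory.ext_of_generate_finite (m0 := FX T E (t + 1))
          (μ := Q.trim (FX_le (t + 1))) (ν := ν.trim (FX_le (t + 1))) C hgen hCpi ?_ ?_
        · intro S hS
          have hSm : MeasurableSet[FX T E (t + 1)] S := by
            rw [hgen]; exact MeasurableSpace.measurableSet_generateFrom hS
          rw [trim_measurableSet_eq _ hSm, trim_measurableSet_eq _ hSm, hagree S hS]
        · rw [trim_measurableSet_eq _ MeasurableSet.univ, trim_measurableSet_eq _ MeasurableSet.univ]
          simp
      rw [← trim_measurableSet_eq (FX_le (t + 1)) hA, ← trim_measurableSet_eq (FX_le (t + 1)) hA,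
        htrim]
  refine Measure.ext fun A hA => key T le_rfl A ?_
  rw [FX_top]; exact hA

end Unique
section NullDecomp

variable {α : Type*} {m mT : MeasurableSpace α} [m0 : MeasurableSpace α]

lemma sup_null_decomp (P : Measure α) {S : Set α}
    (hS : MeasurableSet[m ⊔ MeasurableSpace.generateFrom
      {A | ∃ C, MeasurableSet[mT] C ∧ P C = 0 ∧ A ⊆ C}] S) :
    ∃ A C, MeasurableSet[m] A ∧ MeasurableSet[mT] C ∧ P C = 0 ∧
      (S \ A ∪ A \ S) ⊆ C := by
  let D : MeasurableSpace α :=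
    { MeasurableSet' := fun S => ∃ A C, MeasurableSet[m] A ∧ MeasurableSet[mT] C ∧
        P C = 0 ∧ (S \ A ∪ A \ S) ⊆ C
      measurableSet_empty := ⟨∅, ∅, @MeasurableSet.empty _ m, @MeasurableSet.empty _ mT,
        measure_empty, by simp⟩
      measurableSet_compl := by
        rintro S ⟨A, C, hA, hC, hC0, hsub⟩
        refine ⟨Aᶜ, C, hA.compl, hC, hC0, ?_⟩
        intro x hx
        apply hsub
        rcases hx with hx | hx
        · exact Or.inr ⟨by simpa using hx.2, hx.1⟩
        · exact Or.inl ⟨by simpa using hx.2, hx.1⟩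
      measurableSet_iUnion := by
        intro f hf
        choose A C hA hC hC0 hsub using hf
        refine ⟨⋃ i, A i, ⋃ i, C i, MeasurableSet.iUnion hA, MeasurableSet.iUnion hC,
          measure_iUnion_null hC0, ?_⟩
        rintro x (⟨hx1, hx2⟩ | ⟨hx1, hx2⟩) <;>
          [skip; skip] <;> simp only [Set.mem_iUnion, not_exists] at hx1 hx2 ⊢
        · obtain ⟨i, hi⟩ := hx1
          exact ⟨i, hsub i (Or.inl ⟨hi, hx2 i⟩)⟩
        · obtain ⟨i, hi⟩ := hx1
          exact ⟨i, hsub i (Or.inr ⟨hi, hx2 i⟩)⟩ }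
  have hle : m ⊔ MeasurableSpace.generateFrom
      {A | ∃ C, MeasurableSet[mT] C ∧ P C = 0 ∧ A ⊆ C} ≤ D := by
    refine sup_le ?_ (MeasurableSpace.generateFrom_le ?_)
    · intro S hS
      exact ⟨S, ∅, hS, @MeasurableSet.empty _ mT, measure_empty, by simp⟩
    · rintro S ⟨C, hC, hC0, hsub⟩
      refine ⟨∅, C, @MeasurableSet.empty _ m, hC, hC0, ?_⟩
      intro x hx
      rcases hx with hx | hx
      · exact hsub hx.1
      · exact absurd hx.1 (by simp)
  exact hle S hS

lemma mem_sup_null {P : Measure α} {N : Set (Set α)}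
    (hN : N = {A | ∃ C, MeasurableSet[mT] C ∧ P C = 0 ∧ A ⊆ C})
    {S A C : Set α} (hA : MeasurableSet[m] A) (hC : MeasurableSet[mT] C) (h0 : P C = 0)
    (h1 : S \ A ⊆ C) (h2 : A \ S ⊆ C) :
    MeasurableSet[m ⊔ MeasurableSpace.generateFrom N] S := by
  have hN1 : MeasurableSet[MeasurableSpace.generateFrom N] (A \ S) :=
    MeasurableSpace.measurableSet_generateFrom (by rw [hN]; exact ⟨C, hC, h0, h2⟩)
  have hN2 : MeasurableSet[MeasurableSpace.generateFrom N] (S \ A) :=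
    MeasurableSpace.measurableSet_generateFrom (by rw [hN]; exact ⟨C, hC, h0, h1⟩)
  have hSeq : S = (A ∪ (S \ A)) \ (A \ S) := by
    ext x
    by_cases hxA : x ∈ A <;> by_cases hxS : x ∈ S <;> simp [hxA, hxS]
  rw [hSeq]
  exact MeasurableSet.diff
    (MeasurableSet.union (le_sup_left (α := MeasurableSpace α) _ hA)
      (le_sup_right (α := MeasurableSpace α) _ hN2))
    (le_sup_right (α := MeasurableSpace α) _ hN1)

end NullDecomp
section BwdHelpers
variable {T E}

lemma Ftau_le (t : ℕ) : Ftau T E t ≤ (inferInstance : MeasurableSpace (OmegaBar T E)) := by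
  refine MeasurableSpace.generateFrom_le ?_
  rintro S ⟨s, -, rfl⟩
  exact measurable_snd (measurableSet_singleton s)

lemma Fbar_le (t : ℕ) : Fbar T E t ≤ (inferInstance : MeasurableSpace (OmegaBar T E)) :=
  sup_le (FXbar_le t) (Ftau_le t)

lemma graph_mem_Fbar {τ : Path T E → Fin (T + 1)} (hτ : Measurable τ) :
    MeasurableSet[Fbar T E T] {ω : OmegaBar T E | ω.2 = τ ω.1} := by
  have : {ω : OmegaBar T E | ω.2 = τ ω.1}
      = ⋃ k : Fin (T + 1), ({ω : OmegaBar T E | ω.2 = k} ∩ Prod.fst ⁻¹' {x | τ x = k}) := by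
    ext ω
    simp only [Set.mem_setOf_eq, Set.mem_iUnion, Set.mem_inter_iff, Set.mem_preimage]
    constructor
    · intro h; exact ⟨τ ω.1, h, rfl⟩
    · rintro ⟨k, h1, h2⟩; rw [h1, h2]
  rw [this]
  refine MeasurableSet.iUnion fun k => MeasurableSet.inter ?_ ?_
  · exact le_sup_right (α := MeasurableSpace (OmegaBar T E)) _
      (MeasurableSpace.measurableSet_generateFrom ⟨k, Fin.is_le k, rfl⟩)
  · refine le_sup_left (α := MeasurableSpace (OmegaBar T E)) _ ?_
    rw [FXbar_eq_comap]
    exact ⟨{x | τ x = k}, by rw [FX_top]; exact hτ (measurableSet_singleton k), rfl⟩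

end BwdHelpers
section Bwd
variable {T E}

lemma mem_A0_of_tau (π : ℕ → Kernel E E) [∀ t, IsMarkovKernel (π t)]
    (m0 : Measure E) [IsProbabilityMeasure m0]
    (ν : Measure (Path T E)) [IsProbabilityMeasure ν]
    (hν : IsMarkovLaw T E ν π m0)
    (τ : Path T E → Fin (T + 1)) (hτ : Measurable τ)
    (hst : ∀ t : ℕ, t ≤ T → MeasurableSet[FXnu T E ν t] {x | (τ x : ℕ) ≤ t}) :
    ν.map (fun x => (x, τ x)) ∈ A0 T E π m0 := by
  have hg : Measurable (fun x : Path T E => (x, τ x)) := measurable_id.prodMk hτ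
  set P : Measure (OmegaBar T E) := ν.map (fun x => (x, τ x)) with hPdef
  haveI hPprob : IsProbabilityMeasure P := Measure.isProbabilityMeasure_map hg.aemeasurable
  have hfst : P.map Prod.fst = ν := by
    rw [hPdef, Measure.map_map measurable_fst hg]
    exact Measure.map_id
  refine ⟨hPprob, ?_, ?_, ?_⟩
  · rw [hPdef, Measure.map_map
      (show Measurable (fun ω : OmegaBar T E => ω.1 0) from
        (measurable_pi_apply 0).comp measurable_fst) hg]
    exact hν.1
  · intro t' h1 h2 B hB
    have hmeasset : MeasurableSet {x : Path T E | x ((t' : ℕ) : Fin (T + 1)) ∈ B} :=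
      measurable_pi_apply _ hB
    set pathind : Path T E → ℝ :=
      Set.indicator {x : Path T E | x ((t' : ℕ) : Fin (T + 1)) ∈ B} (fun _ => (1 : ℝ))
      with hpind
    have hfi : Integrable pathind (P.map Prod.fst) := by
      rw [hfst]; exact (integrable_const (1 : ℝ)).indicator hmeasset
    have hkey := condexp_comap_fst (m := FX T E (t' - 1)) (FX_le (t' - 1)) P
      (stronglyMeasurable_const.indicator hmeasset) hfi
    rw [hfst] at hkey
    have hν2 := hν.2 t' h1 h2 B hB
    rw [← hfst] at hν2
    have hpull : ∀ᵐ ω ∂P, (ν[pathind | FX T E (t' - 1)]) ω.1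
        = (π t' (ω.1 ((t' - 1 : ℕ) : Fin (T + 1))) B).toReal := by
      rw [← hfst]
      exact ae_of_ae_map measurable_fst.aemeasurable hν2
    rw [FXbar_eq_comap]
    exact hkey.trans hpull
  · intro t ht
    have hst' := hst t ht
    rw [FXnu] at hst'
    obtain ⟨A, C, hA, hC, hC0, hsub⟩ := sup_null_decomp ν hst'
    rw [FXbarP]
    set N0 : Set (OmegaBar T E) := {ω : OmegaBar T E | ω.2 = τ ω.1}ᶜ with hN0
    have hN0m : MeasurableSet[Fbar T E T] N0 := (graph_mem_Fbar hτ).compl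
    have hCamb : MeasurableSet C := FX_le T _ hC
    have hN0amb : MeasurableSet N0 := Fbar_le T _ hN0m
    have hPC : P (Prod.fst ⁻¹' C) = 0 := by
      rw [hPdef, Measure.map_apply hg (measurable_fst hCamb)]
      simpa [Set.preimage_preimage] using hC0
    have hPN0 : P N0 = 0 := by
      rw [hPdef, Measure.map_apply hg hN0amb]
      convert measure_empty (μ := ν)
      ext x
      simp [hN0]
    refine mem_sup_null (m := FXbar T E t) (mT := Fbar T E T) (P := P) rfl
      (A := Prod.fst ⁻¹' A) (C := N0 ∪ Prod.fst ⁻¹' C) ?_ ?_ ?_ ?_ ?_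
    · rw [FXbar_eq_comap]; exact ⟨A, hA, rfl⟩
    · exact hN0m.union (le_sup_left (α := MeasurableSpace (OmegaBar T E)) _ (by
        rw [FXbar_eq_comap]; exact ⟨C, hC, rfl⟩))
    · exact measure_union_null hPN0 hPC
    · intro ω hω
      by_cases hωg : ω.2 = τ ω.1
      · refine Or.inr ?_
        refine hsub (Or.inl ⟨?_, hω.2⟩)
        show (τ ω.1 : ℕ) ≤ t
        have h' : (ω.2 : ℕ) = (τ ω.1 : ℕ) := congrArg Fin.val hωg
        exact h' ▸ hω.1
      · exact Or.inl hωg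
    · intro ω hω
      by_cases hωg : ω.2 = τ ω.1
      · refine Or.inr ?_
        refine hsub (Or.inr ⟨hω.1, ?_⟩)
        intro hmem
        have h' : (ω.2 : ℕ) = (τ ω.1 : ℕ) := congrArg Fin.val hωg
        exact hω.2 (show (ω.2 : ℕ) ≤ t from h'.symm ▸ hmem)
      · exact Or.inl hωg

end Bwd
section Fwd
variable {T E}

lemma tau_of_mem_A0 (π : ℕ → Kernel E E) [∀ t, IsMarkovKernel (π t)]
    (m0 : Measure E) [IsProbabilityMeasure m0]
    (ν : Measure (Path T E)) [IsProbabilityMeasure ν]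
    (hν : IsMarkovLaw T E ν π m0) {P : Measure (OmegaBar T E)}
    (hP : P ∈ A0 T E π m0) :
    ∃ τ : Path T E → Fin (T + 1), Measurable τ ∧
      (∀ t : ℕ, t ≤ T → MeasurableSet[FXnu T E ν t] {x | (τ x : ℕ) ≤ t}) ∧
      P = ν.map (fun x => (x, τ x)) := by
  classical
  obtain ⟨hPprob, hP0, hPmkv, hPst⟩ := hP
  haveI := hPprob
  set Q : Measure (Path T E) := P.map Prod.fst with hQdef
  haveI : IsProbabilityMeasure Q := Measure.isProbabilityMeasure_map measurable_fst.aemeasurable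
  have hQlaw : IsMarkovLaw T E Q π m0 := by
    constructor
    · rw [hQdef, Measure.map_map (measurable_pi_apply 0) measurable_fst]
      exact hP0
    · intro t' h1 h2 B hB
      have hmeasset : MeasurableSet {x : Path T E | x ((t' : ℕ) : Fin (T + 1)) ∈ B} :=
        measurable_pi_apply _ hB
      set pathind : Path T E → ℝ :=
        Set.indicator {x : Path T E | x ((t' : ℕ) : Fin (T + 1)) ∈ B} (fun _ => (1 : ℝ))
        with hpind
      have hfi : Integrable pathind Q := (integrable_const (1 : ℝ)).indicator hmeasset
      have hkey := condexp_comap_fst (m := FX T E (t' - 1)) (FX_le (t' - 1)) P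
        (stronglyMeasurable_const.indicator hmeasset) hfi
      have hP2 := hPmkv t' h1 h2 B hB
      rw [FXbar_eq_comap] at hP2
      have hcomb : (fun ω : OmegaBar T E => (Q[pathind | FX T E (t' - 1)]) ω.1)
          =ᵐ[P] (fun ω : OmegaBar T E =>
            (π t' (ω.1 ((t' - 1 : ℕ) : Fin (T + 1))) B).toReal) := hkey.symm.trans hP2
      have hcm : Measurable (Q[pathind | FX T E (t' - 1)]) :=
        (stronglyMeasurable_condExp.mono (FX_le (t' - 1))).measurable
      have hπm : Measurable (fun y : Path T E =>
          (π t' (y ((t' - 1 : ℕ) : Fin (T + 1))) B).toReal) :=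
        (ENNReal.measurable_toReal.comp ((π t').measurable_coe hB)).comp
          (measurable_pi_apply _)
      have hmset : MeasurableSet {y : Path T E | (Q[pathind | FX T E (t' - 1)]) y
          = (π t' (y ((t' - 1 : ℕ) : Fin (T + 1))) B).toReal} :=
        measurableSet_eq_fun hcm hπm
      exact (ae_map_iff measurable_fst.aemeasurable hmset).mpr hcomb
  have hQν : Q = ν := markovLaw_unique Q ν hQlaw hν
  -- extract approximating sets for the stopping sets
  have hex : ∀ t : ℕ, t < T → ∃ (S0 : Set (Path T E)) (C : Set (OmegaBar T E)),
      MeasurableSet[FX T E t] S0 ∧ MeasurableSet[Fbar T E T] C ∧ P C = 0 ∧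
      ({ω : OmegaBar T E | (ω.2 : ℕ) ≤ t} \ (Prod.fst ⁻¹' S0)
        ∪ (Prod.fst ⁻¹' S0) \ {ω : OmegaBar T E | (ω.2 : ℕ) ≤ t}) ⊆ C := by
    intro t ht
    have h := hPst t ht.le
    rw [FXbarP] at h
    obtain ⟨A, C, hA, hC, hC0, hsub⟩ := sup_null_decomp P h
    rw [FXbar_eq_comap] at hA
    obtain ⟨S0, hS0, rfl⟩ := hA
    exact ⟨S0, C, hS0, hC, hC0, hsub⟩
  choose Sf Cf hSm0 hCm0 hC00 hsub0 using hex
  set S : ℕ → Set (Path T E) := fun t => if h : t < T then Sf t h else Set.univ with hSdef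
  have hSm : ∀ t, MeasurableSet[FX T E t] (S t) := by
    intro t
    by_cases h : t < T
    · rw [hSdef]; dsimp only; rw [dif_pos h]; exact hSm0 t h
    · rw [hSdef]; dsimp only; rw [dif_neg h]; exact MeasurableSet.univ
  have hST : S T = Set.univ := by rw [hSdef]; dsimp only; rw [dif_neg (lt_irrefl T)]
  have hexist : ∀ x : Path T E, ∃ t, x ∈ S t := fun x => ⟨T, by rw [hST]; trivial⟩
  set τ : Path T E → Fin (T + 1) := fun x =>
    ⟨Nat.find (hexist x), Nat.lt_succ_of_le (Nat.find_le (by rw [hST]; trivial))⟩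
    with hτdef
  have hset : ∀ t : ℕ, {x : Path T E | (τ x : ℕ) ≤ t} = ⋃ (s : ℕ) (_ : s ≤ t), S s := by
    intro t
    ext x
    simp only [Set.mem_setOf_eq, hτdef, Nat.find_le_iff, Set.mem_iUnion]
    exact exists_congr fun s => by tauto
  have hτm : Measurable τ := by
    apply measurable_to_countable'
    intro k
    have h1 : τ ⁻¹' {k} = {x | Nat.find (hexist x) = (k : ℕ)} := by
      ext x
      simp [hτdef, Fin.ext_iff]
    have h2 : {x : Path T E | Nat.find (hexist x) = (k : ℕ)}
        = S (k : ℕ) ∩ ⋂ (m : ℕ) (_ : m < (k : ℕ)), (S m)ᶜ := by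
      ext x
      simp [Nat.find_eq_iff]
    rw [h1, h2]
    exact (FX_le _ _ (hSm _)).inter
      (MeasurableSet.biInter (Set.to_countable _) fun m _ => (FX_le _ _ (hSm m)).compl)
  have hstop : ∀ t : ℕ, t ≤ T → MeasurableSet[FXnu T E ν t] {x | (τ x : ℕ) ≤ t} := by
    intro t ht
    rw [hset t, FXnu]
    refine le_sup_left (α := MeasurableSpace (Path T E)) _ ?_
    exact @MeasurableSet.iUnion _ _ (FX T E t) _ _ fun s =>
      @MeasurableSet.iUnion _ _ (FX T E t) _ _ fun hs => FX_mono hs _ (hSm s)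
  -- the a.e. identification of the stopping time
  have hnull : ∀ t : ℕ, P ({ω : OmegaBar T E | (ω.2 : ℕ) ≤ t}
      \ (Prod.fst ⁻¹' {x | (τ x : ℕ) ≤ t})
      ∪ (Prod.fst ⁻¹' {x | (τ x : ℕ) ≤ t}) \ {ω : OmegaBar T E | (ω.2 : ℕ) ≤ t}) = 0 := by
    intro t
    by_cases ht : t < T
    · set Call : ℕ → Set (OmegaBar T E) := fun s => if h : s < T then Cf s h else ∅
        with hCall
      have hCall0 : ∀ s, P (Call s) = 0 := by
        intro s
        by_cases h : s < T
        · rw [hCall]; dsimp only; rw [dif_pos h]; exact hC00 s h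
        · rw [hCall]; dsimp only; rw [dif_neg h]; exact measure_empty
      refine measure_mono_null ?_ (measure_iUnion_null (s := Call) hCall0)
      rintro ω (⟨hω1, hω2⟩ | ⟨hω1, hω2⟩)
      · -- ω.2 ≤ t but τ ω.1 > t ; in particular ω.1 ∉ S t
        have hnot : ω.1 ∉ S t := by
          intro hmem
          apply hω2
          show (τ ω.1 : ℕ) ≤ t
          exact Nat.find_le (by
            rw [hSdef]; dsimp only; rw [dif_pos ht]
            rw [hSdef] at hmem; dsimp only at hmem; rw [dif_pos ht] at hmem
            exact hmem)
        refine Set.mem_iUnion.mpr ⟨t, ?_⟩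
        rw [hCall]; dsimp only; rw [dif_pos ht]
        refine hsub0 t ht (Or.inl ⟨hω1, ?_⟩)
        intro hmem
        exact hnot (by rw [hSdef]; dsimp only; rw [dif_pos ht]; exact hmem)
      · -- τ ω.1 ≤ t but ω.2 > t ; take s := τ ω.1
        have hs1 : (τ ω.1 : ℕ) ≤ t := hω1
        have hsT : (τ ω.1 : ℕ) < T := lt_of_le_of_lt hs1 ht
        have hmem : ω.1 ∈ S ((τ ω.1 : ℕ)) := by
          have := Nat.find_spec (hexist ω.1)
          exact this
        refine Set.mem_iUnion.mpr ⟨(τ ω.1 : ℕ), ?_⟩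
        rw [hCall]; dsimp only; rw [dif_pos hsT]
        refine hsub0 _ hsT (Or.inr ⟨?_, ?_⟩)
        · rw [hSdef] at hmem; dsimp only at hmem; rw [dif_pos hsT] at hmem
          exact hmem
        · intro hle
          exact hω2 (le_trans hle hs1)
    · -- t ≥ T : both sets are everything
      have hT' : T ≤ t := le_of_not_gt ht
      have h1 : {ω : OmegaBar T E | (ω.2 : ℕ) ≤ t} = Set.univ := by
        ext ω; simp only [Set.mem_setOf_eq, Set.mem_univ, iff_true]
        exact le_trans (Fin.is_le ω.2) hT'
      have h2 : {x : Path T E | (τ x : ℕ) ≤ t} = Set.univ := by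
        ext x; simp only [Set.mem_setOf_eq, Set.mem_univ, iff_true]
        exact le_trans (le_trans (Fin.is_le (τ x)) le_rfl) hT'
      rw [h1, h2]
      simp
  have hiff : ∀ t : ℕ, ∀ᵐ ω ∂P, ((ω.2 : ℕ) ≤ t ↔ (τ ω.1 : ℕ) ≤ t) := by
    intro t
    rw [ae_iff]
    refine measure_mono_null ?_ (hnull t)
    intro ω hω
    simp only [Set.mem_setOf_eq] at hω
    by_cases h1 : (ω.2 : ℕ) ≤ t
    · exact Or.inl ⟨h1, fun h2 => hω ⟨fun _ => h2, fun _ => h1⟩⟩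
    · refine Or.inr ⟨?_, h1⟩
      by_contra h2
      exact hω ⟨fun h => absurd h h1, fun h => absurd h h2⟩
  have hgraph : ∀ᵐ ω ∂P, ω.2 = τ ω.1 := by
    have hall : ∀ᵐ ω ∂P, ∀ t : ℕ, ((ω.2 : ℕ) ≤ t ↔ (τ ω.1 : ℕ) ≤ t) :=
      ae_all_iff.mpr hiff
    filter_upwards [hall] with ω h
    refine Fin.ext (le_antisymm ?_ ?_)
    · exact (h ((τ ω.1 : ℕ))).mpr le_rfl
    · exact (h ((ω.2 : ℕ))).mp le_rfl
  refine ⟨τ, hτm, hstop, ?_⟩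
  have h2 : P.map (fun ω : OmegaBar T E => ω) = P.map (fun ω => (ω.1, τ ω.1)) :=
    Measure.map_congr (hgraph.mono fun ω h => by show ω = (ω.1, τ ω.1); rw [← h])
  have h3 : Q.map (fun x => (x, τ x)) = P.map (fun ω : OmegaBar T E => (ω.1, τ ω.1)) := by
    rw [hQdef, Measure.map_map
      (show Measurable (fun x : Path T E => (x, τ x)) from measurable_id.prodMk hτm)
      measurable_fst]
    rfl
  rw [← hQν, h3, ← h2]
  exact Measure.map_id.symm

end Fwd

theorem stmt_7
    (hT : 1 ≤ T)
    (π : ℕ → Kernel E E) [∀ t, IsMarkovKernel (π t)]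
    (hπc : ∀ t, Continuous (Y := ProbabilityMeasure E) fun x => (⟨π t x, inferInstance⟩ : ProbabilityMeasure E))
    (m0 : Measure E) [IsProbabilityMeasure m0]
    (ν : Measure (Path T E)) [IsProbabilityMeasure ν]
    (hν : IsMarkovLaw T E ν π m0) :
    A0 T E π m0 =
      {P | ∃ τ : Path T E → Fin (T + 1), Measurable τ ∧
        (∀ t : ℕ, t ≤ T → MeasurableSet[FXnu T E ν t] {x | (τ x : ℕ) ≤ t}) ∧
        P = ν.map (fun x => (x, τ x))} := by
  ext P
  simp only [Set.mem_setOf_eq]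
  constructor
  · intro hP
    exact tau_of_mem_A0 π m0 ν hν hP
  · rintro ⟨τ, hτ, hst, rfl⟩
    exact mem_A0_of_tau π m0 ν hν τ hτ hst

end Thms
end LPOS
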